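/- Let f : [0,1] → M be a map of the unit interval (with its Euclidean topology) into Minkowski space M which is continuous with respect to the Fine topology F and strictly ≪-preserving (s < t implies f(s) ≪ f(t)). Then the image of f is a piecewise linear path consisting of a finite number of intervals along time axes: there exist n ∈ ℕ and a partition 0 = t_0 < t_1 < ... < t_n = 1 such that for each i ∈ {1, ..., n}, the image f([t_{i−1}, t_i]) is contained in some time axis. -/

import Mathlib

noncomputable section

open TopologicalSpace Filter

/-- Minkowski space `M = ℝ × ℝ³`. -/
abbrev Mink : Type := ℝ × EuclideanSpace ℝ (Fin 3)

/-- The Euclidean (product) topology on `M`. -/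
def TE : TopologicalSpace Mink := inferInstance

/-- Time difference Δt(x,y). -/
def dtime (x y : Mink) : ℝ := y.1 - x.1

/-- Spatial distance Δr(x,y). -/
def dspace (x y : Mink) : ℝ := ‖y.2 - x.2‖

/-- Chronological order `x ≪ y`. -/
def Chron (x y : Mink) : Prop := dspace x y < dtime x y

/-- Causal order `x ≺ y`. -/
def Causal (x y : Mink) : Prop := dspace x y ≤ dtime x y

/-- Euclidean open ball of radius ε about x. -/
def eball (x : Mink) (ε : ℝ) : Set Mink :=
  {y | Real.sqrt ((y.1 - x.1) ^ 2 + ‖y.2 - x.2‖ ^ 2) < ε}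

/-- Time cone `C^T(x)`. -/
def timeCone (x : Mink) : Set Mink := {x} ∪ {y | Chron x y ∨ Chron y x}

/-- Space cone `C^S(x)`. -/
def spaceCone (x : Mink) : Set Mink := {x} ∪ {y | |dtime x y| < dspace x y}

/-- Light cone `C^L(x)`. -/
def lightCone (x : Mink) : Set Mink := {y | y ≠ x ∧ |dtime x y| = dspace x y}

/-- Causal cone `C^J(x)`. -/
def causalCone (x : Mink) : Set Mink := {x} ∪ {y | Causal x y ∨ Causal y x}

/-- Closed space cone `K^S(x)` (space cone together with the light cone). -/
def closedSpaceCone (x : Mink) : Set Mink := {x} ∪ {y | |dtime x y| ≤ dspace x y}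

/-- Bounded time cones, the defining family of `Z^T`. -/
def BasisT : Set (Set Mink) := {S | ∃ x ε, 0 < ε ∧ S = timeCone x ∩ eball x ε}

/-- Bounded space cones, the defining family of `Z^S`. -/
def BasisS : Set (Set Mink) := {S | ∃ x ε, 0 < ε ∧ S = spaceCone x ∩ eball x ε}

/-- Balls with the light cone of the centre removed, the defining family of `Z`. -/
def BasisZ : Set (Set Mink) := {S | ∃ x ε, 0 < ε ∧ S = eball x ε \ lightCone x}

/-- Zeeman's topology `Z^T` (the Minkowski analogue of the path topology). -/
def ZT : TopologicalSpace Mink := TopologicalSpace.generateFrom BasisT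

/-- The topology `Z^S`. -/
def ZS : TopologicalSpace Mink := TopologicalSpace.generateFrom BasisS

/-- The topology `Z`. -/
def Ztop : TopologicalSpace Mink := TopologicalSpace.generateFrom BasisZ

def Jplus (x : Mink) : Set Mink := {y | Causal x y}
def Jminus (x : Mink) : Set Mink := {y | Causal y x}
def Nplus (x : Mink) : Set Mink := {y | y ≠ x ∧ dtime x y = dspace x y}
def Nminus (x : Mink) : Set Mink := {y | y ≠ x ∧ -dtime x y = dspace x y}

/-- The interval topology `T^tc` whose subbasic open sets are time cones. -/
def Ttc : TopologicalSpace Mink :=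
  TopologicalSpace.generateFrom {S | ∃ x, S = timeCone x}

/-- The interval topology `T^≪` of the irreflexive causal order. -/
def Tll : TopologicalSpace Mink :=
  TopologicalSpace.generateFrom
    ({S | ∃ x, S = Set.univ \ (Jplus x \ {x})} ∪ {S | ∃ x, S = Set.univ \ (Jminus x \ {x})})

/-- The interval topology `T^→` of irreflexive horismos. -/
def Thor : TopologicalSpace Mink :=
  TopologicalSpace.generateFrom
    ({S | ∃ x, S = Set.univ \ Nplus x} ∪ {S | ∃ x, S = Set.univ \ Nminus x})

/-- The topology `(Z^T)′` generated by bounded causal cones. -/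
def ZT' : TopologicalSpace Mink :=
  TopologicalSpace.generateFrom {S | ∃ x ε, 0 < ε ∧ S = causalCone x ∩ eball x ε}

/-- The topology `(Z^S)′` generated by bounded closed space cones. -/
def ZS' : TopologicalSpace Mink :=
  TopologicalSpace.generateFrom {S | ∃ x ε, 0 < ε ∧ S = closedSpaceCone x ∩ eball x ε}

/-- The topology `(T^tc)′` generated by causal cones. -/
def Ttc' : TopologicalSpace Mink :=
  TopologicalSpace.generateFrom {S | ∃ x, S = causalCone x}

/-- The topology `(T^≪)′` generated by closed space cones. -/
def Tll' : TopologicalSpace Mink :=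
  TopologicalSpace.generateFrom {S | ∃ x, S = closedSpaceCone x}

/-- An endless causal curve. -/
def EndlessCausalCurve (γ : ℝ → Mink) : Prop :=
  Continuous γ ∧ (∀ s t : ℝ, s < t → Causal (γ s) (γ t) ∧ γ s ≠ γ t) ∧
    (∀ c : ℝ, ∃ t, c < (γ t).1) ∧ (∀ c : ℝ, ∃ t, (γ t).1 < c)

/-- `γ` is a `T`-limit curve of the sequence `γs` of curves. -/
def IsLimitCurve (T : TopologicalSpace Mink) (γ : ℝ → Mink) (γs : ℕ → ℝ → Mink) : Prop :=
  ∃ nk : ℕ → ℕ, StrictMono nk ∧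
    ∀ p ∈ Set.range γ, ∃ pk : ℕ → Mink,
      (∀ k, pk k ∈ Set.range (γs (nk k))) ∧ Filter.Tendsto pk Filter.atTop (@nhds Mink T p)

/-- The Minkowski quadratic form `q(v) = v₀² − ‖v⃗‖²`. -/
def qform (v : Mink) : ℝ := v.1 ^ 2 - ‖v.2‖ ^ 2

/-- `S` is a time axis: a line `{a + t • v}` with `v` timelike. -/
def IsTimeAxis (S : Set Mink) : Prop :=
  ∃ a v : Mink, ‖v.2‖ < |v.1| ∧ S = {p | ∃ t : ℝ, p = a + t • v}

/-- `S` is a space axis: an affine subspace `a + Λ({0} × ℝ³)` with `Λ` preserving `q`. -/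
def IsSpaceAxis (S : Set Mink) : Prop :=
  ∃ (a : Mink) (Λ : Mink →ₗ[ℝ] Mink), (∀ v, qform (Λ v) = qform v) ∧
    S = (fun w => a + Λ w) '' {v : Mink | v.1 = 0}

/-- `T` induces on every time axis and every space axis the same subspace topology
as the Euclidean topology. -/
def AxesProperty (T : TopologicalSpace Mink) : Prop :=
  ∀ S : Set Mink, IsTimeAxis S ∨ IsSpaceAxis S →
    TopologicalSpace.induced (Subtype.val : S → Mink) T =
      TopologicalSpace.induced (Subtype.val : S → Mink) TE

/-- Zeeman's Fine topology `F`: the finest topology inducing the Euclidean subspace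
topology on every time axis and on every space axis.  (In Mathlib's order on
topologies, finer means smaller, so this is the infimum.) -/
def Fine : TopologicalSpace Mink := sInf {T : TopologicalSpace Mink | AxesProperty T}

open scoped Topology

lemma axesProperty_TE : AxesProperty TE := fun _ _ => rfl
lemma fine_le_TE : Fine ≤ TE := sInf_le axesProperty_TE

lemma timeAxis_isClosed {S : Set Mink} (h : IsTimeAxis S) : IsClosed S := by
  obtain ⟨a, v, -, rfl⟩ := h
  have : {p : Mink | ∃ t : ℝ, p = a + t • v} = (a + ·) '' (Submodule.span ℝ {v} : Set Mink) := by
    ext p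
    simp only [Set.mem_setOf_eq, Set.mem_image, SetLike.mem_coe, Submodule.mem_span_singleton]
    constructor
    · rintro ⟨t, rfl⟩; exact ⟨t • v, ⟨t, rfl⟩, by ring_nf⟩
    · rintro ⟨w, ⟨t, rfl⟩, rfl⟩; exact ⟨t, by ring_nf⟩
  rw [this]
  exact (Homeomorph.addLeft a).isClosedMap _ (Submodule.closed_of_finiteDimensional _)

lemma spaceAxis_isClosed {S : Set Mink} (h : IsSpaceAxis S) : IsClosed S := by
  obtain ⟨a, Λ, -, rfl⟩ := h
  have : (fun w => a + Λ w) '' {v : Mink | v.1 = 0}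
      = (a + ·) '' ((Submodule.map Λ (LinearMap.ker (LinearMap.fst ℝ ℝ (EuclideanSpace ℝ (Fin 3))))) : Set Mink) := by
    ext p
    simp only [Set.mem_image, Set.mem_setOf_eq, SetLike.mem_coe, Submodule.mem_map,
      LinearMap.mem_ker, LinearMap.fst_apply]
    constructor
    · rintro ⟨w, hw, rfl⟩; exact ⟨Λ w, ⟨w, hw, rfl⟩, rfl⟩
    · rintro ⟨_, ⟨w, hw, rfl⟩, rfl⟩; exact ⟨w, hw, rfl⟩
  rw [this]
  exact (Homeomorph.addLeft a).isClosedMap _ (Submodule.closed_of_finiteDimensional _)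

lemma fine_isOpen_of_axes (U : Set Mink)
    (hU : ∀ S : Set Mink, IsTimeAxis S ∨ IsSpaceAxis S → IsOpen ((Subtype.val : S → Mink) ⁻¹' U)) :
    IsOpen[Fine] U := by
  set G : Set (Set Mink) := {V | IsOpen V} ∪ {U} with hG
  have hT₀ : AxesProperty (generateFrom G) := by
    intro S hS
    apply le_antisymm
    · refine induced_mono ?_
      intro V hV
      exact GenerateOpen.basic _ (Or.inl hV)
    · rw [induced_generateFrom_eq]
      refine le_generateFrom ?_
      rintro W ⟨V, hV | hV, rfl⟩
      · exact (continuous_subtype_val).isOpen_preimage _ hV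
      · rcases hV with rfl
        exact hU S hS
  have hle : Fine ≤ generateFrom G := sInf_le hT₀
  exact hle _ (GenerateOpen.basic _ (Or.inr rfl))

lemma constOn_of_finite {W : Set ℝ} (hW : IsPreconnected W) {g : ℝ → Mink}
    (hg : ContinuousOn g W) {F : Finset Mink} (hval : ∀ t ∈ W, g t ∈ F)
    {a b : ℝ} (ha : a ∈ W) (hb : b ∈ W) : g a = g b := by
  set φ : ℝ → ℝ := fun t => ‖g t - g a‖ with hφ
  have hφc : ContinuousOn φ W := (hg.sub continuousOn_const).norm
  have himg : IsPreconnected (φ '' W) := hW.image φ hφc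
  have hoc : (φ '' W).OrdConnected := himg.ordConnected
  have h0 : (0:ℝ) ∈ φ '' W := ⟨a, ha, by simp [hφ]⟩
  have hb' : φ b ∈ φ '' W := ⟨b, hb, rfl⟩
  by_contra hne
  have hpos : 0 < φ b := by
    simp only [hφ, norm_pos_iff, sub_ne_zero]
    exact fun h => hne h.symm
  have hsub : Set.Icc (0:ℝ) (φ b) ⊆ φ '' W := hoc.out h0 hb'
  have hfin : (φ '' W).Finite := by
    refine Set.Finite.subset (Set.Finite.image (fun y => ‖y - g a‖) F.finite_toSet) ?_
    rintro - ⟨t, ht, rfl⟩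
    exact ⟨g t, hval t ht, rfl⟩
  exact (Set.Icc_infinite hpos).mono hsub hfin

lemma seq_contra (f : ℝ → Mink)
    (hcont : @Continuous (Set.Icc (0 : ℝ) 1) Mink _ Fine (fun s => f s.1))
    {s : ℝ} (hs : s ∈ Set.Icc (0:ℝ) 1)
    (t : ℕ → ℝ) (ht : ∀ n, t n ∈ Set.Icc (0:ℝ) 1)
    (hlim : Tendsto t atTop (𝓝 s))
    (htl : ∀ n, ‖(f (t n)).2 - (f s).2‖ < |(f (t n)).1 - (f s).1|)
    (hprop : ∀ m n : ℕ, m ≠ n → ∀ c : ℝ, f (t n) - f s ≠ c • (f (t m) - f s)) :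
    False := by
  set x : Mink := f s with hx
  set p : ℕ → Mink := fun n => f (t n) with hp
  have hpne : ∀ n, p n ≠ x := by
    intro n h
    have := htl n
    rw [hp] at h
    simp only [hx, h, sub_self] at this
    simp at this
  -- Euclidean continuity and convergence
  have hE : @Continuous (Set.Icc (0:ℝ) 1) Mink _ TE (fun s => f s.1) :=
    continuous_le_rng fine_le_TE hcont
  have ht' : Tendsto (fun n => (⟨t n, ht n⟩ : Set.Icc (0:ℝ) 1)) atTop (𝓝 ⟨s, hs⟩) :=
    tendsto_subtype_rng.mpr hlim
  have hplim : Tendsto p atTop (𝓝 x) := (hE.tendsto ⟨s, hs⟩).comp ht'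
  set U : Set Mink := (Set.range p)ᶜ with hU
  have hfin : ∀ S : Set Mink, IsTimeAxis S ∨ IsSpaceAxis S → {n | p n ∈ S}.Finite := by
    intro S hS
    by_cases hxS : x ∈ S
    · rcases hS with ⟨a, v, hv, rfl⟩ | ⟨a, Λ, hΛ, rfl⟩
      · -- time axis through x: at most one n
        refine Set.Subsingleton.finite ?_
        rintro m hm n hn
        by_contra hmn
        obtain ⟨r₀, hr₀⟩ := hxS
        obtain ⟨r₁, hr₁⟩ := hm
        obtain ⟨r₂, hr₂⟩ := hn
        have hpm : p m - x = (r₁ - r₀) • v := by rw [hr₁, hr₀]; module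
        have hpn : p n - x = (r₂ - r₀) • v := by rw [hr₂, hr₀]; module
        have hne1 : r₁ - r₀ ≠ 0 := by
          intro h
          exact hpne m (by rw [← sub_eq_zero, hpm, h, zero_smul])
        refine hprop m n hmn ((r₂ - r₀) / (r₁ - r₀)) ?_
        rw [hpn, hpm, smul_smul, div_mul_cancel₀ _ hne1]
      · -- space axis through x: empty
        refine Set.Finite.subset (Set.finite_empty) ?_
        rintro n hn
        obtain ⟨w₀, hw₀, hxw⟩ := hxS
        obtain ⟨w, hw, hpw⟩ := hn
        exfalso
        have hdiff : p n - x = Λ (w - w₀) := by rw [← hpw, ← hxw, map_sub]; show a + Λ w - (a + Λ w₀) = Λ w - Λ w₀; abel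
        have hq : qform (p n - x) = qform (w - w₀) := by rw [hdiff, hΛ]
        have hq1 : qform (w - w₀) ≤ 0 := by
          have h1 : (w - w₀).1 = 0 := by
            simp only [Set.mem_setOf_eq] at hw hw₀
            simp [Prod.fst_sub, hw, hw₀]
          rw [qform, h1]
          nlinarith [sq_nonneg ‖(w - w₀).2‖]
        have hq2 : 0 < qform (p n - x) := by
          rw [qform]
          have h := htl n
          have h2 : ‖(p n - x).2‖ ^ 2 < |(p n - x).1| ^ 2 := by
            apply pow_lt_pow_left₀ _ (norm_nonneg _) (by norm_num)
            simpa [hp, hx] using h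
          rw [sq_abs] at h2
          linarith
        linarith [hq ▸ hq2]
    · -- x not on S: convergence + closedness
      have hSc : IsClosed S := hS.elim timeAxis_isClosed spaceAxis_isClosed
      have hev : ∀ᶠ n in atTop, p n ∈ Sᶜ :=
        hplim.eventually (hSc.isOpen_compl.mem_nhds hxS)
      obtain ⟨N, hN⟩ := eventually_atTop.mp hev
      refine Set.Finite.subset (Set.finite_Iio N) ?_
      intro n hn
      by_contra h
      exact hN n (not_lt.mp h) hn
  have hUopen : IsOpen[Fine] U := by
    apply fine_isOpen_of_axes
    intro S hS
    have h2 : (Set.range p ∩ S).Finite := by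
      refine Set.Finite.subset ((hfin S hS).image p) ?_
      rintro y ⟨⟨n, rfl⟩, hyS⟩
      exact ⟨n, hyS, rfl⟩
    have h1 : ((Subtype.val : S → Mink) ⁻¹' (Set.range p)).Finite := by
      have he : (Subtype.val : S → Mink) ⁻¹' (Set.range p)
          = (Subtype.val : S → Mink) ⁻¹' (Set.range p ∩ S) := by
        ext y; simp [y.2]
      rw [he]
      exact Set.Finite.preimage Subtype.val_injective.injOn h2
    have he2 : (Subtype.val : S → Mink) ⁻¹' U = ((Subtype.val : S → Mink) ⁻¹' (Set.range p))ᶜ := rfl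
    rw [he2]
    exact h1.isClosed.isOpen_compl
  have hxU : x ∈ U := by
    rintro ⟨n, hn⟩
    exact hpne n hn
  have hVopen : IsOpen ((fun s : Set.Icc (0:ℝ) 1 => f s.1) ⁻¹' U) :=
    continuous_def.mp hcont U hUopen
  have hev2 := ht'.eventually_mem (hVopen.mem_nhds hxU)
  obtain ⟨n, hn⟩ := hev2.exists
  exact hn ⟨n, rfl⟩
lemma germ (f : ℝ → Mink)
    (hcont : @Continuous (Set.Icc (0 : ℝ) 1) Mink _ Fine (fun s => f s.1))
    (horder : ∀ s ∈ Set.Icc (0 : ℝ) 1, ∀ t ∈ Set.Icc (0 : ℝ) 1, s < t → Chron (f s) (f t))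
    (e : ℝ) (he : e = 1 ∨ e = -1) {s : ℝ} (hs : s ∈ Set.Icc (0:ℝ) 1)
    (hside : ∀ δ > (0:ℝ), ∃ t₀ ∈ Set.Icc (0:ℝ) 1, 0 < e * (t₀ - s) ∧ e * (t₀ - s) ≤ δ) :
    ∃ δ > (0:ℝ), ∃ v : Mink, ‖v.2‖ < |v.1| ∧
      ∀ t ∈ Set.Icc (0:ℝ) 1, 0 ≤ e * (t - s) → e * (t - s) ≤ δ →
        ∃ r : ℝ, f t = f s + r • v := by
  classical
  have he0 : e ≠ 0 := by rcases he with rfl | rfl <;> norm_num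
  have habs : ∀ t ∈ Set.Icc (0:ℝ) 1, t ≠ s → ‖(f t).2 - (f s).2‖ < |(f t).1 - (f s).1| := by
    intro t ht hts
    rcases lt_or_gt_of_ne hts with h | h
    · have := horder t ht s hs h
      rw [Chron, dspace, dtime] at this
      rw [norm_sub_rev, abs_sub_comm]
      exact lt_of_lt_of_le this (le_abs_self _)
    · have := horder s hs t ht h
      rw [Chron, dspace, dtime] at this
      exact lt_of_lt_of_le this (le_abs_self _)
  set u : ℝ → Mink := fun t => ((f t).1 - (f s).1)⁻¹ • (f t - f s) with hu
  set W : ℝ → Set ℝ := fun δ => {t | t ∈ Set.Icc (0:ℝ) 1 ∧ 0 < e * (t - s) ∧ e * (t - s) ≤ δ}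
    with hW
  have hWicc : ∀ δ, ∀ t ∈ W δ, t ∈ Set.Icc (0:ℝ) 1 := fun δ t ht => ht.1
  have hWne : ∀ δ, ∀ t ∈ W δ, t ≠ s := by
    rintro δ t ht rfl
    have h2 : (0:ℝ) < e * (t - t) := ht.2.1
    linarith [ht.2.1]
  have hden : ∀ t ∈ Set.Icc (0:ℝ) 1, t ≠ s → (f t).1 - (f s).1 ≠ 0 := by
    intro t ht hts h
    have := habs t ht hts
    rw [h] at this
    simp at this
    linarith [norm_nonneg ((f t).2 - (f s).2), this]
  have hfc : ContinuousOn f (Set.Icc (0:ℝ) 1) := by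
    have hE : @Continuous (Set.Icc (0:ℝ) 1) Mink _ TE (fun s => f s.1) :=
      continuous_le_rng fine_le_TE hcont
    exact continuousOn_iff_continuous_restrict.mpr hE
  have hucont : ∀ δ > (0:ℝ), ContinuousOn u (W δ) := by
    intro δ hδ
    have hsub : W δ ⊆ Set.Icc (0:ℝ) 1 := fun t ht => ht.1
    have h1 : ContinuousOn f (W δ) := hfc.mono hsub
    exact ((h1.fst.sub continuousOn_const).inv₀
      (fun t ht => hden t (hWicc δ t ht) (hWne δ t ht))).smul (h1.sub continuousOn_const)
  have hWpre : ∀ δ, IsPreconnected (W δ) := by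
    intro δ
    refine isPreconnected_iff_ordConnected.mpr ⟨?_⟩
    rintro a ⟨⟨ha0, ha1⟩, ha2, ha3⟩ b ⟨⟨hb0, hb1⟩, hb2, hb3⟩ z ⟨hz1, hz2⟩
    rcases he with rfl | rfl
    · exact ⟨⟨by linarith, by linarith⟩, by nlinarith, by nlinarith⟩
    · exact ⟨⟨by linarith, by linarith⟩, by nlinarith, by nlinarith⟩
  -- main negation
  by_contra hneg
  have hstep : ∀ (F : Finset Mink) (δ : ℝ), 0 < δ → ∃ τ, τ ∈ W δ ∧ u τ ∉ F := by
    intro F δ hδ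
    by_contra hall
    push_neg at hall
    obtain ⟨t₀, ht₀, ht₀2, ht₀3⟩ := hside δ hδ
    have ht₀W : t₀ ∈ W δ := ⟨ht₀, ht₀2, ht₀3⟩
    have hconst : ∀ τ ∈ W δ, u τ = u t₀ := fun τ hτ =>
      constOn_of_finite (hWpre δ) (hucont δ hδ) hall hτ ht₀W
    set v : Mink := u t₀ with hv
    have hα : (f t₀).1 - (f s).1 ≠ 0 := hden t₀ ht₀ (hWne δ t₀ ht₀W)
    have htl : ‖v.2‖ < |v.1| := by
      have h1 : v.2 = ((f t₀).1 - (f s).1)⁻¹ • ((f t₀ - f s).2) := rfl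
      have h2 : v.1 = ((f t₀).1 - (f s).1)⁻¹ * ((f t₀ - f s).1) := rfl
      rw [h1, h2, norm_smul, abs_mul, Real.norm_eq_abs]
      have hpos : 0 < |((f t₀).1 - (f s).1)⁻¹| := abs_pos.mpr (inv_ne_zero hα)
      apply mul_lt_mul_of_pos_left _ hpos
      have := habs t₀ ht₀ (hWne δ t₀ ht₀W)
      simpa using this
    refine hneg ⟨δ, hδ, v, htl, ?_⟩
    intro t ht h0 h1
    rcases eq_or_lt_of_le h0 with h0' | h0'
    · have hts : t = s := by
        have : e * (t - s) = 0 := h0'.symm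
        rcases mul_eq_zero.mp this with h | h
        · exact absurd h he0
        · linarith [sub_eq_zero.mp h]
      exact ⟨0, by rw [hts, zero_smul, add_zero]⟩
    · have htW : t ∈ W δ := ⟨ht, h0', h1⟩
      refine ⟨(f t).1 - (f s).1, ?_⟩
      have h2 : u t = v := hconst t htW
      have hαt : (f t).1 - (f s).1 ≠ 0 := hden t ht (hWne δ t htW)
      rw [← h2, hu]
      simp only [smul_smul, mul_inv_cancel₀ hαt, one_smul]
      abel
  -- build the sequence
  set δfun : ℕ → ℝ := fun n => 1 / (n + 1) with hδfun
  have hδpos : ∀ n, 0 < δfun n := by intro n; positivity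
  set g : ℕ → Finset Mink × ℝ := fun n => Nat.rec
    (∅, (hstep ∅ (δfun 0) (hδpos 0)).choose)
    (fun n pr => (insert (u pr.2) pr.1,
      (hstep (insert (u pr.2) pr.1) (δfun (n+1)) (hδpos (n+1))).choose)) n with hg
  set tt : ℕ → ℝ := fun n => (g n).2 with htt
  set FF : ℕ → Finset Mink := fun n => (g n).1 with hFF
  have hgspec : ∀ n, tt n ∈ W (δfun n) ∧ u (tt n) ∉ FF n := by
    intro n
    cases n with
    | zero => exact (hstep ∅ (δfun 0) (hδpos 0)).choose_spec
    | succ n => exact (hstep (insert (u (tt n)) (FF n)) (δfun (n+1)) (hδpos (n+1))).choose_spec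
  have hFsucc : ∀ n, FF (n+1) = insert (u (tt n)) (FF n) := fun n => rfl
  have hFmem : ∀ m n, m < n → u (tt m) ∈ FF n := by
    intro m n hmn
    induction n with
    | zero => omega
    | succ n ih =>
      rw [hFsucc]
      rcases Nat.lt_succ_iff_lt_or_eq.mp hmn with h | h
      · exact Finset.mem_insert_of_mem (ih h)
      · rw [h]; exact Finset.mem_insert_self _ _
  have hdist : ∀ m n, m < n → u (tt n) ≠ u (tt m) := by
    intro m n hmn h
    exact (hgspec n).2 (h ▸ hFmem m n hmn)
  -- apply seq_contra
  have hmemIcc : ∀ n, tt n ∈ Set.Icc (0:ℝ) 1 := fun n => ((hgspec n).1).1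
  have hlim : Tendsto tt atTop (𝓝 s) := by
    have hb : ∀ n, |tt n - s| ≤ δfun n := by
      intro n
      obtain ⟨-, h1, h2⟩ := (hgspec n).1
      rcases he with rfl | rfl
      · rw [abs_of_pos (by linarith)]; linarith
      · rw [abs_of_neg (by linarith)]; linarith
    have h0 : Tendsto (fun n => tt n - s) atTop (𝓝 0) := by
      apply squeeze_zero_norm (fun n => by simpa using hb n)
      simpa [hδfun] using (tendsto_one_div_add_atTop_nhds_zero_nat : Tendsto (fun n : ℕ => 1 / ((n:ℝ) + 1)) atTop (𝓝 0)).congr (fun n => one_div _)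
    have := h0.add (tendsto_const_nhds : Tendsto (fun _ : ℕ => s) atTop (𝓝 s))
    simpa using this
  have htln : ∀ n, ‖(f (tt n)).2 - (f s).2‖ < |(f (tt n)).1 - (f s).1| :=
    fun n => habs (tt n) (hmemIcc n) (hWne _ _ (hgspec n).1)
  refine seq_contra f hcont hs tt hmemIcc hlim htln ?_
  intro m n hmn c hc
  have hαn : (f (tt n)).1 - (f s).1 ≠ 0 := hden _ (hmemIcc n) (hWne _ _ (hgspec n).1)
  have hαm : (f (tt m)).1 - (f s).1 ≠ 0 := hden _ (hmemIcc m) (hWne _ _ (hgspec m).1)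
  have hfst : (f (tt n)).1 - (f s).1 = c * ((f (tt m)).1 - (f s).1) := by
    have := congrArg Prod.fst hc
    simpa using this
  have hc0 : c ≠ 0 := by
    intro h
    rw [h, zero_mul] at hfst
    exact hαn hfst
  have hcoef : ((f (tt n)).1 - (f s).1)⁻¹ * c = ((f (tt m)).1 - (f s).1)⁻¹ := by
    rw [hfst, mul_inv]
    field_simp
  have huu : u (tt n) = u (tt m) := by
    rw [hu]
    simp only
    rw [hc, smul_smul, hcoef]
  rcases Nat.lt_or_ge m n with h | h
  · exact hdist m n h huu
  · rcases Nat.lt_or_ge n m with h2 | h2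
    · exact hdist n m h2 huu.symm
    · omega
theorem fine_continuous_chron_preserving_piecewise_linear (f : ℝ → Mink)
    (hcont : @Continuous (Set.Icc (0 : ℝ) 1) Mink _ Fine (fun s => f s.1))
    (horder : ∀ s ∈ Set.Icc (0 : ℝ) 1, ∀ t ∈ Set.Icc (0 : ℝ) 1, s < t → Chron (f s) (f t)) :
    ∃ (n : ℕ) (τ : Fin (n + 1) → ℝ), StrictMono τ ∧ τ 0 = 0 ∧ τ (Fin.last n) = 1 ∧
      ∀ i : Fin n, ∃ S : Set Mink, IsTimeAxis S ∧
        f '' Set.Icc (τ i.castSucc) (τ i.succ) ⊆ S := by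
  classical
  set A : Set ℝ := {b | b ∈ Set.Icc (0:ℝ) 1 ∧ ∃ n : ℕ, ∃ τ : Fin (n+1) → ℝ,
    StrictMono τ ∧ τ 0 = 0 ∧ τ (Fin.last n) = b ∧
    ∀ i : Fin n, ∃ S : Set Mink, IsTimeAxis S ∧
      f '' Set.Icc (τ i.castSucc) (τ i.succ) ⊆ S} with hA
  have hA0 : (0:ℝ) ∈ A := by
    haveI : Subsingleton (Fin (0+1)) := Fin.subsingleton_one
    refine ⟨⟨le_refl 0, by norm_num⟩, 0, fun _ => 0, Subsingleton.strictMono _, rfl, rfl,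
      fun i => i.elim0⟩
  have hsnoc : ∀ b c : ℝ, b ∈ A → b < c → c ≤ 1 →
      (∃ S : Set Mink, IsTimeAxis S ∧ f '' Set.Icc b c ⊆ S) → c ∈ A := by
    rintro b c ⟨hbIcc, n, τ, hmono, h0, hlast, hax⟩ hbc hc1 ⟨S, hSax, hSsub⟩
    refine ⟨⟨le_trans hbIcc.1 hbc.le, hc1⟩, n+1, Fin.snoc τ c, ?_, ?_, ?_, ?_⟩
    · intro i j hij
      rcases Fin.eq_castSucc_or_eq_last j with ⟨j', rfl⟩ | rfl
      · rcases Fin.eq_castSucc_or_eq_last i with ⟨i', rfl⟩ | rfl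
        · rw [Fin.snoc_castSucc, Fin.snoc_castSucc]
          exact hmono (Fin.castSucc_lt_castSucc_iff.mp hij)
        · exfalso
          have hj := j'.isLt
          simp only [Fin.lt_def, Fin.coe_castSucc, Fin.val_last] at hij
          omega
      · rcases Fin.eq_castSucc_or_eq_last i with ⟨i', rfl⟩ | rfl
        · rw [Fin.snoc_castSucc, Fin.snoc_last]
          calc τ i' ≤ τ (Fin.last n) := hmono.monotone (Fin.le_last i')
            _ = b := hlast
            _ < c := hbc
        · exact absurd hij (lt_irrefl _)
    · have h00 : (0 : Fin (n+2)) = Fin.castSucc 0 := rfl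
      rw [h00, Fin.snoc_castSucc, h0]
    · rw [Fin.snoc_last]
    · intro i
      rcases Fin.eq_castSucc_or_eq_last i with ⟨j, rfl⟩ | rfl
      · obtain ⟨S', h1, h2⟩ := hax j
        refine ⟨S', h1, ?_⟩
        rw [Fin.succ_castSucc, Fin.snoc_castSucc, Fin.snoc_castSucc]
        exact h2
      · refine ⟨S, hSax, ?_⟩
        rw [Fin.succ_last, Fin.snoc_last, Fin.snoc_castSucc, hlast]
        exact hSsub
  have hbddA : BddAbove A := ⟨1, fun b hb => hb.1.2⟩
  have hAne : A.Nonempty := ⟨0, hA0⟩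
  set c := sSup A with hc
  have hc0 : 0 ≤ c := le_csSup hbddA hA0
  have hc1 : c ≤ 1 := csSup_le hAne (fun b hb => hb.1.2)
  have hcIcc : c ∈ Set.Icc (0:ℝ) 1 := ⟨hc0, hc1⟩
  have hcA : c ∈ A := by
    rcases eq_or_lt_of_le hc0 with h | hcpos
    · rw [← h]; exact hA0
    · have hside : ∀ δ > (0:ℝ), ∃ t₀ ∈ Set.Icc (0:ℝ) 1,
          0 < (-1) * (t₀ - c) ∧ (-1) * (t₀ - c) ≤ δ := by
        intro δ hδ
        refine ⟨max 0 (c - δ), ⟨le_max_left _ _, ?_⟩, ?_, ?_⟩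
        · have : max 0 (c - δ) < c := max_lt hcpos (by linarith)
          linarith
        · have : max 0 (c - δ) < c := max_lt hcpos (by linarith)
          nlinarith
        · have : c - δ ≤ max 0 (c - δ) := le_max_right _ _
          nlinarith
      obtain ⟨δ, hδ, v, hv, hline⟩ := germ f hcont horder (-1) (Or.inr rfl) hcIcc hside
      have hεpos : 0 < min δ c := lt_min hδ hcpos
      obtain ⟨b, hbA, hbgt⟩ := exists_lt_of_lt_csSup hAne
        (show c - min δ c < sSup A by rw [← hc]; linarith)
      have hbc : b ≤ c := le_csSup hbddA hbA
      rcases eq_or_lt_of_le hbc with h | hlt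
      · rwa [← h]
      · refine hsnoc b c hbA hlt hc1 ⟨{p | ∃ r : ℝ, p = f c + r • v}, ⟨f c, v, hv, rfl⟩, ?_⟩
        rintro y ⟨t, ⟨htb, htc⟩, rfl⟩
        have ht01 : t ∈ Set.Icc (0:ℝ) 1 := ⟨le_trans hbA.1.1 htb, le_trans htc hc1⟩
        have h1 : 0 ≤ (-1) * (t - c) := by linarith
        have h2 : (-1) * (t - c) ≤ δ := by
          have : min δ c ≤ δ := min_le_left _ _
          nlinarith
        obtain ⟨r, hr⟩ := hline t ht01 h1 h2
        exact ⟨r, hr⟩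
  have hceq1 : c = 1 := by
    by_contra hne
    have hclt : c < 1 := lt_of_le_of_ne hc1 hne
    have hside : ∀ δ > (0:ℝ), ∃ t₀ ∈ Set.Icc (0:ℝ) 1,
        0 < 1 * (t₀ - c) ∧ 1 * (t₀ - c) ≤ δ := by
      intro δ hδ
      refine ⟨min 1 (c + δ), ⟨?_, min_le_left _ _⟩, ?_, ?_⟩
      · have : (0:ℝ) ≤ c + δ := by linarith
        exact le_min (by norm_num) this
      · have : c < min 1 (c + δ) := lt_min hclt (by linarith)
        linarith
      · have : min 1 (c + δ) ≤ c + δ := min_le_right _ _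
        linarith
    obtain ⟨δ, hδ, v, hv, hline⟩ := germ f hcont horder 1 (Or.inl rfl) hcIcc hside
    set b := min 1 (c + δ) with hb
    have hcb : c < b := lt_min hclt (by linarith)
    have hbA : b ∈ A := by
      refine hsnoc c b hcA hcb (min_le_left _ _)
        ⟨{p | ∃ r : ℝ, p = f c + r • v}, ⟨f c, v, hv, rfl⟩, ?_⟩
      rintro y ⟨t, ⟨htc, htb⟩, rfl⟩
      have ht01 : t ∈ Set.Icc (0:ℝ) 1 := ⟨le_trans hc0 htc, le_trans htb (min_le_left _ _)⟩
      have h1 : 0 ≤ 1 * (t - c) := by linarith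
      have h2 : 1 * (t - c) ≤ δ := by
        have : b ≤ c + δ := min_le_right _ _
        linarith
      obtain ⟨r, hr⟩ := hline t ht01 h1 h2
      exact ⟨r, hr⟩
    have := le_csSup hbddA hbA
    rw [← hc] at this
    linarith
  obtain ⟨-, n, τ, h1, h2, h3, h4⟩ := hcA
  rw [hceq1] at h3
  exact ⟨n, τ, h1, h2, h3, h4⟩
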